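/- Let λ > 0, a, b > 0, and let u ∈ W^{2,1}(-1,1) have only simple zeros in [-1,1] (i.e., u(x) = 0 implies u'(x) ≠ 0). Then the map N : W^{2,1}(-1,1) → L¹(-1,1), N(v) = a v⁺ - b v⁻, is Fréchet differentiable at u with derivative DN(u)v = (a χ_{u⁺} + b χ_{u⁻}) v, where χ_{u⁺}, χ_{u⁻} are the characteristic functions of {x : u(x) > 0} and {x : u(x) < 0}. -/

import Mathlib

open MeasureTheory Set Filter Topology

private lemma aux_bound (a b s t : ℝ) (ha : 0 ≤ a) (hb : 0 ≤ b) :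
    |(a * max (s + t) 0 - b * max (-(s + t)) 0) - (a * max s 0 - b * max (-s) 0)
      - ((if 0 < s then a else 0) + (if s < 0 then b else 0)) * t| ≤ 2 * (a + b) * |t| := by
  set c := (if 0 < s then a else 0) + (if s < 0 then b else 0) with hc
  have hc1 : |c| ≤ a + b := by
    rw [hc]; split_ifs <;> rw [abs_of_nonneg (by positivity)] <;> linarith
  have h1 : |max (s + t) 0 - max s 0| ≤ |t| := by
    simpa using abs_max_sub_max_le_abs (s + t) s 0
  have h2 : |max (-(s + t)) 0 - max (-s) 0| ≤ |t| := by
    simpa using abs_max_sub_max_le_abs (-(s + t)) (-s) 0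
  have e1 : (a * max (s + t) 0 - b * max (-(s + t)) 0) - (a * max s 0 - b * max (-s) 0) - c * t
      = a * (max (s + t) 0 - max s 0) - b * (max (-(s + t)) 0 - max (-s) 0) - c * t := by ring
  rw [e1]
  calc |a * (max (s + t) 0 - max s 0) - b * (max (-(s + t)) 0 - max (-s) 0) - c * t|
      ≤ |a * (max (s + t) 0 - max s 0) - b * (max (-(s + t)) 0 - max (-s) 0)| + |c * t| :=
        abs_sub _ _
    _ ≤ |a * (max (s + t) 0 - max s 0)| + |b * (max (-(s + t)) 0 - max (-s) 0)| + |c * t| := by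
        gcongr; exact abs_sub _ _
    _ ≤ 2 * (a + b) * |t| := by
        rw [abs_mul, abs_mul, abs_mul, abs_of_nonneg ha, abs_of_nonneg hb]
        have := abs_nonneg t
        nlinarith [mul_le_mul_of_nonneg_right hc1 (abs_nonneg t),
          mul_le_mul_of_nonneg_left h1 ha, mul_le_mul_of_nonneg_left h2 hb]

private lemma aux_zero (a b s t : ℝ) (h : |t| < |s|) :
    (a * max (s + t) 0 - b * max (-(s + t)) 0) - (a * max s 0 - b * max (-s) 0)
      - ((if 0 < s then a else 0) + (if s < 0 then b else 0)) * t = 0 := by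
  have ht1 : t ≤ |t| := le_abs_self t
  have ht2 : -t ≤ |t| := neg_le_abs t
  rcases lt_trichotomy s 0 with hs | hs | hs
  · have hs' : |s| = -s := abs_of_neg hs
    have h1 : s + t < 0 := by linarith [hs' ▸ h]
    rw [max_eq_right hs.le, max_eq_right h1.le, max_eq_left (by linarith : (0:ℝ) ≤ -s),
      max_eq_left (by linarith : (0:ℝ) ≤ -(s + t)), if_neg (by linarith), if_pos hs]
    ring
  · simp [hs] at h; linarith [abs_nonneg t]
  · have hs' : |s| = s := abs_of_pos hs
    have h1 : 0 < s + t := by linarith [hs' ▸ h]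
    rw [max_eq_left hs.le, max_eq_left h1.le, max_eq_right (by linarith : -s ≤ (0:ℝ)),
      max_eq_right (by linarith : -(s + t) ≤ (0:ℝ)), if_pos hs, if_neg (by linarith)]
    ring

private lemma aux_isolated {f : ℝ → ℝ} {x : ℝ} (hd : DifferentiableAt ℝ f x)
    (h0 : f x = 0) (h1 : deriv f x ≠ 0) : ∀ᶠ y in 𝓝[≠] x, f y ≠ 0 := by
  have hs := hasDerivAt_iff_tendsto_slope.mp hd.hasDerivAt
  filter_upwards [hs.eventually_ne h1] with y hy hfy
  exact hy (by simp [slope, hfy, h0])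

private lemma aux_finite {f : ℝ → ℝ} (hd : Differentiable ℝ f)
    (hs : ∀ x ∈ Icc (-1:ℝ) 1, f x = 0 → deriv f x ≠ 0) :
    (Icc (-1:ℝ) 1 ∩ {x | f x = 0}).Finite := by
  set Z := Icc (-1:ℝ) 1 ∩ {x | f x = 0} with hZ
  have hcl : IsClosed Z :=
    isClosed_Icc.inter (isClosed_singleton.preimage hd.continuous)
  have hcomp : IsCompact Z := isCompact_Icc.inter_right
    (isClosed_singleton.preimage hd.continuous)
  refine hcomp.finite ?_
  rw [isDiscrete_iff_discreteTopology, discreteTopology_subtype_iff]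
  intro x hx
  obtain ⟨hx1, hx2⟩ := hx
  have hev : ∀ᶠ y in 𝓝[≠] x, f y ≠ 0 := aux_isolated (hd x) hx2 (hs x hx1 hx2)
  rw [Filter.inf_principal_eq_bot]
  filter_upwards [hev] with y hy
  exact fun hyZ => hy hyZ.2

private lemma aux_small {f : ℝ → ℝ} (hd : Differentiable ℝ f)
    (hs : ∀ x ∈ Icc (-1:ℝ) 1, f x = 0 → deriv f x ≠ 0) {τ : ℝ} (hτ : 0 < τ) :
    ∃ η > (0:ℝ), volume (Icc (-1:ℝ) 1 ∩ {x | |f x| ≤ η}) ≤ ENNReal.ofReal τ := by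
  set A : ℕ → Set ℝ := fun n => Icc (-1:ℝ) 1 ∩ {x | |f x| ≤ 1 / (n + 1)} with hA
  have hAm : ∀ n, MeasurableSet (A n) := fun n =>
    measurableSet_Icc.inter
      ((isClosed_le (continuous_abs.comp hd.continuous) continuous_const).measurableSet)
  have hAanti : Antitone A := by
    intro m n hmn
    refine inter_subset_inter_right _ fun x hx => ?_
    simp only [mem_setOf_eq] at hx ⊢
    refine hx.trans ?_
    have : (m:ℝ) + 1 ≤ (n:ℝ) + 1 := by exact_mod_cast by omega
    exact one_div_le_one_div_of_le (by positivity) this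
  have hiInter : ⋂ n, A n = Icc (-1:ℝ) 1 ∩ {x | f x = 0} := by
    ext x
    simp only [mem_iInter, mem_inter_iff, mem_setOf_eq]
    constructor
    · intro h
      refine ⟨(h 0).1, ?_⟩
      by_contra hne
      obtain ⟨n, hn⟩ := exists_nat_one_div_lt (abs_pos.mpr hne)
      exact absurd ((h n).2) (not_le.mpr hn)
    · intro ⟨h1, h2⟩ n
      exact ⟨h1, by simp only [mem_setOf_eq, h2, abs_zero]; positivity⟩
  have htend : Tendsto (volume ∘ A) atTop (𝓝 (volume (⋂ n, A n))) :=
    tendsto_measure_iInter_atTop (fun n => (hAm n).nullMeasurableSet) hAanti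
      ⟨0, ((measure_mono inter_subset_left).trans_lt measure_Icc_lt_top).ne⟩
  rw [hiInter, ((aux_finite hd hs).measure_zero volume)] at htend
  have hlt : ∀ᶠ n in atTop, (volume ∘ A) n < ENNReal.ofReal τ :=
    htend.eventually_lt_const (by simpa using hτ)
  obtain ⟨n, hn⟩ := hlt.exists
  exact ⟨1 / (n + 1), by positivity, hn.le⟩




/-- Lemma 7.3: Fréchet differentiability of the Nemytskii map
N(v) = a v⁺ - b v⁻ from W^{2,1}(-1,1) to L¹(-1,1) at a function with only
simple zeros, with derivative DN(u)v = (a χ_{u⁺} + b χ_{u⁻}) v.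
The Banach space `E` models W^{2,1}(-1,1), with `ι` the realization of its
elements as C¹ functions, continuously embedded in C¹ (constant `K`).
The Fréchet derivative condition is stated by the L¹ estimate. -/
theorem stmt_17 (lam a b : ℝ) (hlam : 0 < lam) (ha : 0 < a) (hb : 0 < b)
    (E : Type*) [NormedAddCommGroup E] [NormedSpace ℝ E]
    (ι : E → ℝ → ℝ) (hlin : IsLinearMap ℝ ι) (K : ℝ)
    (hdiff : ∀ v : E, Differentiable ℝ (ι v))
    (hemb : ∀ v : E, ∀ x ∈ Set.Icc (-1 : ℝ) 1,
      |ι v x| ≤ K * ‖v‖ ∧ |deriv (ι v) x| ≤ K * ‖v‖)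
    (u : E)
    (hsimple : ∀ x ∈ Set.Icc (-1 : ℝ) 1, ι u x = 0 → deriv (ι u) x ≠ 0) :
    ∀ ε > (0 : ℝ), ∃ δ > (0 : ℝ), ∀ v : E, ‖v‖ ≤ δ →
      (∫ x in Set.Icc (-1 : ℝ) 1,
        |(a * max (ι (u + v) x) 0 - b * max (-(ι (u + v) x)) 0)
          - (a * max (ι u x) 0 - b * max (-(ι u x)) 0)
          - ((Set.indicator {y : ℝ | 0 < ι u y} (fun _ => a) x
              + Set.indicator {y : ℝ | ι u y < 0} (fun _ => b) x) * ι v x)|)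
      ≤ ε * ‖v‖ := by
  intro ε hε
  set K' := max K 0 with hK'
  have hK'0 : (0:ℝ) ≤ K' := le_max_right _ _
  have hKv : ∀ (v : E), ∀ x ∈ Icc (-1:ℝ) 1, |ι v x| ≤ K' * ‖v‖ := fun v x hx =>
    ((hemb v x hx).1).trans (mul_le_mul_of_nonneg_right (le_max_left _ _) (norm_nonneg v))
  have hτ0 : 0 < ε / (2 * (a + b) * K' + 1) := by positivity
  set τ := ε / (2 * (a + b) * K' + 1) with hτ
  obtain ⟨η, hη0, hηm⟩ := aux_small (hdiff u) hsimple hτ0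
  refine ⟨η / (2 * (K' + 1)), by positivity, fun v hv => ?_⟩
  set S := Icc (-1:ℝ) 1 ∩ {x | |ι u x| ≤ η} with hS
  have hSmeas : MeasurableSet S := measurableSet_Icc.inter
    ((isClosed_le (continuous_abs.comp (hdiff u).continuous) continuous_const).measurableSet)
  set C := 2 * (a + b) * (K' * ‖v‖) with hC
  have hC0 : 0 ≤ C := by positivity
  set F : ℝ → ℝ := fun x =>
    |(a * max (ι (u + v) x) 0 - b * max (-(ι (u + v) x)) 0)
      - (a * max (ι u x) 0 - b * max (-(ι u x)) 0)
      - ((Set.indicator {y : ℝ | 0 < ι u y} (fun _ => a) x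
          + Set.indicator {y : ℝ | ι u y < 0} (fun _ => b) x) * ι v x)| with hF
  have hrw : ∀ x, F x = |(a * max (ι u x + ι v x) 0 - b * max (-(ι u x + ι v x)) 0)
      - (a * max (ι u x) 0 - b * max (-(ι u x)) 0)
      - ((if 0 < ι u x then a else 0) + (if ι u x < 0 then b else 0)) * ι v x| := by
    intro x
    simp only [hF, hlin.map_add, Pi.add_apply, Set.indicator_apply, Set.mem_setOf_eq]
  have hptb : ∀ x ∈ Icc (-1:ℝ) 1, F x ≤ S.indicator (fun _ => C) x := by
    intro x hx
    rw [hrw x]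
    by_cases hxS : x ∈ S
    · rw [indicator_of_mem hxS]
      refine (aux_bound a b (ι u x) (ι v x) ha.le hb.le).trans ?_
      rw [hC]
      nlinarith [mul_le_mul_of_nonneg_left (hKv v x hx) (by positivity : (0:ℝ) ≤ 2 * (a + b))]
    · rw [indicator_of_notMem hxS]
      have h1 : η < |ι u x| := by
        by_contra hle
        exact hxS ⟨hx, not_lt.mp hle⟩
      have h2 : |ι v x| ≤ K' * ‖v‖ := hKv v x hx
      have h3 : K' * ‖v‖ ≤ K' * (η / (2 * (K' + 1))) := mul_le_mul_of_nonneg_left hv hK'0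
      have h4 : K' * (η / (2 * (K' + 1))) < η := by
        rw [mul_div_assoc', div_lt_iff₀ (by positivity)]
        nlinarith
      rw [aux_zero a b _ _ (by linarith), abs_zero]
  have hmeasF : Measurable F := by
    rw [hF]
    apply Measurable.abs
    refine Measurable.sub (Measurable.sub ?_ ?_) (Measurable.mul ?_ (hdiff v).continuous.measurable)
    · exact ((continuous_const.mul ((hdiff (u + v)).continuous.max continuous_const)).sub
        (continuous_const.mul (((hdiff (u + v)).continuous.neg).max continuous_const))).measurable
    · exact ((continuous_const.mul ((hdiff u).continuous.max continuous_const)).sub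
        (continuous_const.mul (((hdiff u).continuous.neg).max continuous_const))).measurable
    · exact (Measurable.indicator measurable_const
        ((isOpen_lt continuous_const (hdiff u).continuous).measurableSet)).add
        (Measurable.indicator measurable_const
          ((isOpen_lt (hdiff u).continuous continuous_const).measurableSet))
  have hint1 : IntegrableOn F (Icc (-1:ℝ) 1) volume := by
    refine Measure.integrableOn_of_bounded (M := C) measure_Icc_lt_top.ne
      hmeasF.aestronglyMeasurable ?_
    refine (ae_restrict_iff' measurableSet_Icc).mpr (ae_of_all _ fun x hx => ?_)
    have h5 : F x ≤ C := (hptb x hx).trans (Set.indicator_le_self' (fun _ _ => hC0) x)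
    have h6 : 0 ≤ F x := by rw [hF]; exact abs_nonneg _
    rw [Real.norm_eq_abs, abs_of_nonneg h6]
    exact h5
  have hint2 : IntegrableOn (S.indicator fun _ => C) (Icc (-1:ℝ) 1) volume :=
    (integrableOn_const measure_Icc_lt_top.ne).indicator hSmeas
  calc ∫ x in Icc (-1:ℝ) 1, F x
      ≤ ∫ x in Icc (-1:ℝ) 1, S.indicator (fun _ => C) x :=
        setIntegral_mono_on hint1 hint2 measurableSet_Icc hptb
    _ = ∫ _x in Icc (-1:ℝ) 1 ∩ S, C := setIntegral_indicator hSmeas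
    _ = (volume (Icc (-1:ℝ) 1 ∩ S)).toReal * C := by rw [setIntegral_const, smul_eq_mul]; rfl
    _ ≤ τ * C := by
        have h5 : volume (Icc (-1:ℝ) 1 ∩ S) ≤ ENNReal.ofReal τ :=
          le_trans (measure_mono inter_subset_right) hηm
        exact mul_le_mul_of_nonneg_right (ENNReal.toReal_le_of_le_ofReal hτ0.le h5) hC0
    _ ≤ ε * ‖v‖ := by
        rw [hτ, hC, div_mul_eq_mul_div, div_le_iff₀ (by positivity)]
        nlinarith [norm_nonneg v, hε.le, hK'0, mul_nonneg (norm_nonneg v) hK'0,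
          mul_nonneg hε.le (mul_nonneg (norm_nonneg v) hK'0)]
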